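/- arXiv:2210.15292 — 2 statements merged into one kernel-verified Lean document; each statement's English description precedes it below -/
import Mathlib

section
/- Under the assumptions that a > 1, b ≤ c, a ≥ (m+1)^d, d(θ*+nρ,θ*) ≥ c·n^{−d} for all n ≥ 1, and d(θ*+nρ,θ*) > b for n ∈ {1,…,m−1}: if θ ∈ 𝕋^D and n₁ < n₂ are natural numbers with θ + n₁ρ ∈ B_{r_j}(θ*) and θ + n₂ρ ∈ B_{r_j}(θ*), then n₂ − n₁ ≥ m in case j = 1, and n₂ − n₁ ≥ (m+1)^{j−1} in case j ≥ 2, where r_j = (b/2)·a^{−(j−1)}. -/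
/-- If θ+n₁ρ and θ+n₂ρ both lie in B_{r_j}(θ*) with n₁ < n₂, then
n₂-n₁ ≥ m if j = 1 and n₂-n₁ ≥ (m+1)^{j-1} if j ≥ 2. -/
theorem stmt2 {T : Type*} [MetricSpace T] [AddCommGroup T]
    (hdist_inv : ∀ x y z : T, dist (x + z) (y + z) = dist x y)
    (a b c d : ℝ) (m : ℕ) (θstar ρ : T)
    (ha : 1 < a) (hb0 : 0 < b) (hb1 : b < 1) (hc : 0 < c) (hd : 1 < d)
    (hbc : b ≤ c) (ham : ((m : ℝ) + 1) ^ d ≤ a)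
    (hdio : ∀ n : ℕ, 1 ≤ n → c * (n : ℝ) ^ (-d) ≤ dist (θstar + n • ρ) θstar)
    (hgap : ∀ n : ℕ, 1 ≤ n → n ≤ m - 1 → b < dist (θstar + n • ρ) θstar)
    (θ : T) (j n₁ n₂ : ℕ) (hj : 1 ≤ j) (h12 : n₁ < n₂)
    (h1 : θ + n₁ • ρ ∈ Metric.ball θstar (b / 2 * a ^ (-((j : ℝ) - 1))))
    (h2 : θ + n₂ • ρ ∈ Metric.ball θstar (b / 2 * a ^ (-((j : ℝ) - 1)))) :
    (j = 1 → m ≤ n₂ - n₁) ∧ (2 ≤ j → (m + 1) ^ (j - 1) ≤ n₂ - n₁) := by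
  set k := n₂ - n₁ with hk
  have hk1 : 1 ≤ k := by omega
  have hn2 : n₂ = k + n₁ := by omega
  have ha0 : (0:ℝ) < a := lt_trans one_pos ha
  have key : dist (θstar + k • ρ) θstar = dist (θ + n₂ • ρ) (θ + n₁ • ρ) := by
    have e1 : θstar + k • ρ = k • ρ + θstar := by abel
    have e2 : θstar = (0 : T) + θstar := by abel
    have e3 : θ + n₂ • ρ = k • ρ + (θ + n₁ • ρ) := by
      rw [hn2, add_nsmul]; abel
    have e4 : θ + n₁ • ρ = (0:T) + (θ + n₁ • ρ) := by abel
    have L : dist (θstar + k • ρ) θstar = dist (k • ρ) (0:T) := by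
      rw [e1]; nth_rewrite 2 [e2]; exact hdist_inv _ _ _
    have R : dist (θ + n₂ • ρ) (θ + n₁ • ρ) = dist (k • ρ) (0:T) := by
      rw [e3]; nth_rewrite 2 [e4]; exact hdist_inv _ _ _
    rw [L, R]
  simp only [Metric.mem_ball] at h1 h2
  have htri : dist (θstar + k • ρ) θstar < b * a ^ (-((j : ℝ) - 1)) := by
    rw [key]
    calc dist (θ + n₂ • ρ) (θ + n₁ • ρ)
        ≤ dist (θ + n₂ • ρ) θstar + dist θstar (θ + n₁ • ρ) := dist_triangle _ _ _
      _ < b/2 * a ^ (-((j : ℝ) - 1)) + b/2 * a ^ (-((j : ℝ) - 1)) := by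
          rw [dist_comm θstar]
          exact add_lt_add h2 h1
      _ = b * a ^ (-((j : ℝ) - 1)) := by ring
  constructor
  · intro hj1
    subst hj1
    simp only [Nat.cast_one, sub_self, neg_zero, Real.rpow_zero, mul_one] at htri
    by_contra hmk
    push_neg at hmk
    have := hgap k hk1 (by omega)
    linarith
  · intro hj2
    have hkpos : (0:ℝ) < (k:ℝ) := by exact_mod_cast hk1
    have hdk := hdio k hk1
    have h5 : b * (k:ℝ) ^ (-d) < b * a ^ (-((j:ℝ)-1)) := by
      have hb' : b * (k:ℝ)^(-d) ≤ c * (k:ℝ)^(-d) :=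
        mul_le_mul_of_nonneg_right hbc (Real.rpow_nonneg hkpos.le _)
      linarith
    have h6 : (k:ℝ) ^ (-d) < a ^ (-((j:ℝ)-1)) := (mul_lt_mul_iff_right₀ hb0).mp h5
    rw [Real.rpow_neg hkpos.le, Real.rpow_neg ha0.le] at h6
    have h7 : a ^ ((j:ℝ)-1) < (k:ℝ) ^ d :=
      (inv_lt_inv₀ (Real.rpow_pos_of_pos hkpos d) (Real.rpow_pos_of_pos ha0 _)).mp h6
    by_contra hkk
    push_neg at hkk
    have c1 : (k:ℝ) ≤ ((m:ℝ)+1) ^ (j-1) := by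
      have : (k:ℝ) ≤ (((m+1)^(j-1) : ℕ) : ℝ) := by exact_mod_cast le_of_lt hkk
      push_cast at this
      exact this
    have hm0 : (0:ℝ) ≤ (m:ℝ)+1 := by positivity
    have c2 : (k:ℝ)^d ≤ (((m:ℝ)+1)^(j-1))^d :=
      Real.rpow_le_rpow hkpos.le c1 (le_of_lt (lt_trans one_pos hd))
    have c3 : (((m:ℝ)+1)^(j-1))^d = (((m:ℝ)+1)^d)^(j-1) := by
      rw [← Real.rpow_natCast (((m:ℝ)+1)^d) (j-1), ← Real.rpow_natCast ((m:ℝ)+1) (j-1),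
        ← Real.rpow_mul hm0, ← Real.rpow_mul hm0, mul_comm]
    have c4 : (((m:ℝ)+1)^d)^(j-1) ≤ a^(j-1 : ℕ) :=
      pow_le_pow_left₀ (Real.rpow_nonneg hm0 _) ham _
    have c5 : (a:ℝ)^(j-1:ℕ) = a ^ ((j:ℝ)-1) := by
      rw [← Real.rpow_natCast a (j-1)]
      congr 1
      push_cast [hj]
      ring
    rw [c3] at c2
    rw [c5] at c4
    linarith
end

section
/- Let m ≥ 2 be a natural number and a > 1 a real number. If visits of an orbit θ + ℓρ (ℓ = 1,…,N) to the sets B_{r_j}(θ*)\B_{r_{j+1}}(θ*) occur with the gap constraints that at most ⌊N/m⌋ indices ℓ land in B_{r_1}(θ*) and at most ⌊N/(m+1)^{j−1}⌋ indices land in B_{r_j}(θ*) for each j ≥ 2, and if a function h: 𝕋^D → ℝ satisfies h(θ') ≥ (1−j)·log a whenever θ' ∈ B_{r_j}(θ*)\B_{r_{j+1}}(θ*) (with B_{r_0}(θ*) = 𝕋^D), and if m > 22, then (1/N)·∑_{ℓ=1}^N h(θ + ℓρ) ≥ (1/2)·log a. -/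
open scoped Classical

/-- Under the stated gap (counting) constraints on visits to the
balls B_{r_j}(θ*) and the lower bound h(θ') ≥ (1-j)·log a on the annuli,
the Birkhoff-type average of h along the orbit is at least (1/2)·log a. -/
theorem stmt3 {T : Type*} [MetricSpace T] [AddCommGroup T]
    (a b : ℝ) (m N : ℕ) (θstar ρ θ : T) (r : ℕ → ℝ) (h : T → ℝ)
    (ha : 1 < a) (hb0 : 0 < b) (hb1 : b < 1) (hm : 22 < m) (hN : 1 ≤ N)
    (hr0 : Metric.ball θstar (r 0) = Set.univ)
    (hrj : ∀ j : ℕ, 1 ≤ j → r j = b / 2 * a ^ (-((j : ℝ) - 1)))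
    (hcount1 :
      ((Finset.Icc 1 N).filter (fun ℓ => θ + ℓ • ρ ∈ Metric.ball θstar (r 1))).card ≤ N / m)
    (hcountj : ∀ j : ℕ, 2 ≤ j →
      ((Finset.Icc 1 N).filter (fun ℓ => θ + ℓ • ρ ∈ Metric.ball θstar (r j))).card ≤
        N / (m + 1) ^ (j - 1))
    (hh : ∀ j : ℕ, ∀ θ' : T, θ' ∈ Metric.ball θstar (r j) \ Metric.ball θstar (r (j + 1)) →
      (1 - (j : ℝ)) * Real.log a ≤ h θ') :
    (1 / 2) * Real.log a ≤ (1 / (N : ℝ)) * ∑ ℓ ∈ Finset.Icc 1 N, h (θ + ℓ • ρ) := by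
  have hL0 : 0 < Real.log a := Real.log_pos ha
  set L := Real.log a with hLdef
  -- balls are nested
  have hball : ∀ i j : ℕ, i ≤ j → Metric.ball θstar (r j) ⊆ Metric.ball θstar (r i) := by
    intro i j hij
    rcases Nat.eq_zero_or_pos i with h0 | h1
    · simp [h0, hr0]
    · refine Metric.ball_subset_ball ?_
      rw [hrj i h1, hrj j (h1.trans_le hij)]
      have hb2 : (0:ℝ) ≤ b / 2 := by linarith
      refine mul_le_mul_of_nonneg_left ?_ hb2
      refine Real.rpow_le_rpow_of_exponent_le ha.le ?_
      have : (i : ℝ) ≤ j := Nat.cast_le.mpr hij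
      linarith
  -- no visits to the ball of radius r (N+2)
  have hbig : N < (m+1)^(N+1) := by
    calc N < 2 ^ N := Nat.lt_two_pow_self
    _ ≤ 2 ^ (N+1) := Nat.pow_le_pow_right (by norm_num) (Nat.le_succ N)
    _ ≤ (m+1) ^ (N+1) := Nat.pow_le_pow_left (by omega) _
  have hnone : ∀ ℓ ∈ Finset.Icc 1 N, θ + ℓ • ρ ∉ Metric.ball θstar (r (N+2)) := by
    have h0 := hcountj (N+2) (by omega)
    have h1 : N / (m+1) ^ (N+2-1) = 0 := Nat.div_eq_of_lt hbig
    rw [h1, Nat.le_zero, Finset.card_eq_zero] at h0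
    intro ℓ hℓ hmem
    have : ℓ ∈ ((Finset.Icc 1 N).filter
        (fun ℓ => θ + ℓ • ρ ∈ Metric.ball θstar (r (N+2)))) :=
      Finset.mem_filter.mpr ⟨hℓ, hmem⟩
    rw [h0] at this
    exact absurd this (Finset.notMem_empty _)
  -- annulus index of each orbit point
  set P : ℕ → ℕ → Prop := fun ℓ j => θ + ℓ • ρ ∈ Metric.ball θstar (r j) with hPdef
  set jf : ℕ → ℕ := fun ℓ => Nat.findGreatest (P ℓ) (N+1) with hjfdef
  have hP0 : ∀ ℓ, P ℓ 0 := fun ℓ => by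
    show θ + ℓ • ρ ∈ Metric.ball θstar (r 0)
    rw [hr0]; trivial
  have hmem : ∀ ℓ, P ℓ (jf ℓ) := fun ℓ => Nat.findGreatest_spec (Nat.zero_le _) (hP0 ℓ)
  have hle : ∀ ℓ, jf ℓ ≤ N+1 := fun ℓ => Nat.findGreatest_le _
  have hnotmem : ∀ ℓ ∈ Finset.Icc 1 N, ¬ P ℓ (jf ℓ + 1) := by
    intro ℓ hℓ
    rcases eq_or_lt_of_le (hle ℓ) with he | hlt
    · rw [hjfdef] at he ⊢
      rw [he]
      exact hnone ℓ hℓ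
    · exact Nat.findGreatest_is_greatest (Nat.lt_succ_self _) hlt
  have hhb : ∀ ℓ ∈ Finset.Icc 1 N, (1 - (jf ℓ : ℝ)) * L ≤ h (θ + ℓ • ρ) := by
    intro ℓ hℓ
    exact hh (jf ℓ) _ ⟨hmem ℓ, hnotmem ℓ hℓ⟩
  -- each jf ℓ is at most the number of balls containing the point
  have hcard : ∀ ℓ ∈ Finset.Icc 1 N, jf ℓ ≤
      ((Finset.Icc 1 (N+1)).filter (fun j => θ + ℓ • ρ ∈ Metric.ball θstar (r j))).card := by
    intro ℓ _
    have hsub : Finset.Icc 1 (jf ℓ) ⊆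
        (Finset.Icc 1 (N+1)).filter (fun j => θ + ℓ • ρ ∈ Metric.ball θstar (r j)) := by
      intro j hj
      rw [Finset.mem_Icc] at hj
      rw [Finset.mem_filter, Finset.mem_Icc]
      exact ⟨⟨hj.1, hj.2.trans (hle ℓ)⟩, hball j (jf ℓ) hj.2 (hmem ℓ)⟩
    have := Finset.card_le_card hsub
    simpa using this
  -- double counting
  have hswap : ∑ ℓ ∈ Finset.Icc 1 N,
        ((Finset.Icc 1 (N+1)).filter (fun j => θ + ℓ • ρ ∈ Metric.ball θstar (r j))).card
      = ∑ j ∈ Finset.Icc 1 (N+1),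
        ((Finset.Icc 1 N).filter (fun ℓ => θ + ℓ • ρ ∈ Metric.ball θstar (r j))).card := by
    simp_rw [Finset.card_filter]
    exact Finset.sum_comm
  -- bound the total visit count, in ℝ
  set c : ℕ → ℕ := fun j =>
    ((Finset.Icc 1 N).filter (fun ℓ => θ + ℓ • ρ ∈ Metric.ball θstar (r j))).card with hcdef
  have hm23 : (23:ℝ) ≤ (m:ℝ) := by exact_mod_cast hm
  set x : ℝ := 1 / ((m:ℝ) + 1) with hxdef
  have hx0 : 0 < x := by positivity
  have hxhalf : x ≤ 1/2 := by
    rw [hxdef, div_le_div_iff₀ (by linarith) (by norm_num)]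
    linarith
  have hc1 : (c 1 : ℝ) ≤ (N:ℝ) / m := by
    calc (c 1 : ℝ) ≤ ((N / m : ℕ) : ℝ) := Nat.cast_le.mpr hcount1
    _ ≤ (N:ℝ) / m := Nat.cast_div_le
  have hcj : ∀ j : ℕ, 2 ≤ j → (c j : ℝ) ≤ (N:ℝ) * x ^ (j-1) := by
    intro j hj
    calc (c j : ℝ) ≤ ((N / (m+1) ^ (j-1) : ℕ) : ℝ) := Nat.cast_le.mpr (hcountj j hj)
    _ ≤ (N:ℝ) / ((m:ℝ)+1) ^ (j-1) := by
        have := Nat.cast_div_le (α := ℝ) (m := N) (n := (m+1)^(j-1))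
        push_cast at this ⊢
        exact this
    _ = (N:ℝ) * x ^ (j-1) := by
        rw [hxdef, div_pow, one_pow, div_eq_mul_inv, ← div_eq_mul_inv]
        ring
  have hgeo : ∑ j ∈ Finset.Icc 2 (N+1), x ^ (j-1) ≤ 2 * x := by
    have hre : ∑ j ∈ Finset.Icc 2 (N+1), x ^ (j-1)
        = ∑ i ∈ Finset.range N, x ^ (i+1) := by
      rw [show Finset.Icc 2 (N+1) = Finset.Ico 2 (N+2) by rw [← Finset.Ico_add_one_right_eq_Icc]; rfl,
        Finset.sum_Ico_eq_sum_range]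
      refine Finset.sum_congr (by norm_num) (fun i _ => by congr 1; omega)
    rw [hre]
    calc ∑ i ∈ Finset.range N, x ^ (i+1) = x * ∑ i ∈ Finset.range N, x ^ i := by
          rw [Finset.mul_sum]; exact Finset.sum_congr rfl (fun i _ => by ring)
    _ ≤ x * 2 := by
        refine mul_le_mul_of_nonneg_left ?_ hx0.le
        calc ∑ i ∈ Finset.range N, x ^ i ≤ ∑ i ∈ Finset.range N, (1/2:ℝ) ^ i :=
              Finset.sum_le_sum (fun i _ => pow_le_pow_left₀ hx0.le hxhalf i)
        _ ≤ 2 := sum_geometric_two_le N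
    _ = 2 * x := by ring
  have hsplit : Finset.Icc 1 (N+1) = insert 1 (Finset.Icc 2 (N+1)) := by
    ext j; simp [Finset.mem_Icc, Finset.mem_insert]; omega
  have hT : ∑ j ∈ Finset.Icc 1 (N+1), (c j : ℝ) ≤ (N:ℝ) / 2 := by
    rw [hsplit, Finset.sum_insert (by simp)]
    have h2 : ∑ j ∈ Finset.Icc 2 (N+1), (c j : ℝ) ≤ (N:ℝ) * (2 * x) := by
      calc ∑ j ∈ Finset.Icc 2 (N+1), (c j : ℝ)
          ≤ ∑ j ∈ Finset.Icc 2 (N+1), (N:ℝ) * x ^ (j-1) :=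
            Finset.sum_le_sum (fun j hj => hcj j (Finset.mem_Icc.mp hj).1)
      _ = (N:ℝ) * ∑ j ∈ Finset.Icc 2 (N+1), x ^ (j-1) := by rw [Finset.mul_sum]
      _ ≤ (N:ℝ) * (2 * x) := mul_le_mul_of_nonneg_left hgeo (by positivity)
    have hNm : (N:ℝ) / m ≤ (N:ℝ) / 23 := by
      apply div_le_div_of_nonneg_left (by positivity) (by norm_num) hm23
    have h2x : (N:ℝ) * (2 * x) ≤ 2 * (N:ℝ) / 23 := by
      rw [hxdef, show (N:ℝ) * (2 * (1/((m:ℝ)+1))) = 2*(N:ℝ)/((m:ℝ)+1) by ring]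
      exact div_le_div_of_nonneg_left (by positivity) (by norm_num) (by linarith)
    have hN0 : (0:ℝ) ≤ N := Nat.cast_nonneg N
    linarith
  -- total annulus-index sum is at most N/2
  have hS : ∑ ℓ ∈ Finset.Icc 1 N, (jf ℓ : ℝ) ≤ (N:ℝ) / 2 := by
    have h1 : ∑ ℓ ∈ Finset.Icc 1 N, jf ℓ ≤ ∑ j ∈ Finset.Icc 1 (N+1), c j := by
      rw [← hswap]
      exact Finset.sum_le_sum hcard
    calc ∑ ℓ ∈ Finset.Icc 1 N, (jf ℓ : ℝ)
        = ((∑ ℓ ∈ Finset.Icc 1 N, jf ℓ : ℕ) : ℝ) := by push_cast; rfl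
    _ ≤ ((∑ j ∈ Finset.Icc 1 (N+1), c j : ℕ) : ℝ) := Nat.cast_le.mpr h1
    _ = ∑ j ∈ Finset.Icc 1 (N+1), (c j : ℝ) := by push_cast; rfl
    _ ≤ (N:ℝ) / 2 := hT
  -- conclude
  have hNpos : (0:ℝ) < N := by exact_mod_cast hN
  have hsum : (N:ℝ)/2 * L ≤ ∑ ℓ ∈ Finset.Icc 1 N, h (θ + ℓ • ρ) := by
    have h1 : ∑ ℓ ∈ Finset.Icc 1 N, (1 - (jf ℓ : ℝ)) * L
        ≤ ∑ ℓ ∈ Finset.Icc 1 N, h (θ + ℓ • ρ) := Finset.sum_le_sum hhb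
    have h2 : ∑ ℓ ∈ Finset.Icc 1 N, (1 - (jf ℓ : ℝ)) * L
        = ((N:ℝ) - ∑ ℓ ∈ Finset.Icc 1 N, (jf ℓ : ℝ)) * L := by
      rw [← Finset.sum_mul, Finset.sum_sub_distrib, Finset.sum_const, Nat.card_Icc]
      simp
    rw [h2] at h1
    nlinarith [hS, hL0.le, h1]
  calc (1/2 : ℝ) * L = (1/(N:ℝ)) * ((N:ℝ)/2 * L) := by field_simp
  _ ≤ (1/(N:ℝ)) * ∑ ℓ ∈ Finset.Icc 1 N, h (θ + ℓ • ρ) :=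
      mul_le_mul_of_nonneg_left hsum (by positivity)
end
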